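/- Let k be a field, A = k[t] the polynomial ring, and M an A-module. For a ∈ A write M[a] := { m ∈ M : a • m = 0 }, an A-submodule and in particular a k-vector space. Assume that dim_k M[a] = deg(a) for every nonzero a ∈ A. Then for every nonzero a ∈ A the A-module M[a] is isomorphic to A/(a). -/

import Mathlib

open Polynomial

section Aux

/-- If `m₁` has order ideal `(x)` and `m₂` has order ideal `(y)` with `x, y` coprime,
then `m₁ + m₂` has order ideal `(x*y)`. -/
lemma aux_torsionOf_add {A : Type*} [CommRing A] {N : Type*} [AddCommGroup N] [Module A N]
    {x y : A} {m₁ m₂ : N} (hx : Ideal.torsionOf A N m₁ = Ideal.span {x})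
    (hy : Ideal.torsionOf A N m₂ = Ideal.span {y}) (hco : IsCoprime x y) :
    Ideal.torsionOf A N (m₁ + m₂) = Ideal.span {x * y} := by
  have hx0 : x • m₁ = 0 := by
    have : x ∈ Ideal.torsionOf A N m₁ := hx ▸ Ideal.mem_span_singleton_self x
    rwa [Ideal.mem_torsionOf_iff] at this
  have hy0 : y • m₂ = 0 := by
    have : y ∈ Ideal.torsionOf A N m₂ := hy ▸ Ideal.mem_span_singleton_self y
    rwa [Ideal.mem_torsionOf_iff] at this
  apply le_antisymm
  · intro b hb
    rw [Ideal.mem_torsionOf_iff] at hb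
    rw [Ideal.mem_span_singleton]
    have h1 : (x * b) • m₂ = 0 := by
      have e1 : (x * b) • (m₁ + m₂) = 0 := by rw [mul_smul, hb, smul_zero]
      have e2 : (x * b) • m₁ = 0 := by
        rw [mul_comm, mul_smul, hx0, smul_zero]
      rw [smul_add, e2, zero_add] at e1
      exact e1
    have h2 : (y * b) • m₁ = 0 := by
      have e1 : (y * b) • (m₁ + m₂) = 0 := by rw [mul_smul, hb, smul_zero]
      have e2 : (y * b) • m₂ = 0 := by
        rw [mul_comm, mul_smul, hy0, smul_zero]
      rw [smul_add, e2, add_zero] at e1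
      exact e1
    have hyb : y ∣ b := by
      have : x * b ∈ Ideal.torsionOf A N m₂ := (Ideal.mem_torsionOf_iff _ _).mpr h1
      rw [hy, Ideal.mem_span_singleton] at this
      exact hco.symm.dvd_of_dvd_mul_left this
    have hxb : x ∣ b := by
      have : y * b ∈ Ideal.torsionOf A N m₁ := (Ideal.mem_torsionOf_iff _ _).mpr h2
      rw [hx, Ideal.mem_span_singleton] at this
      exact hco.dvd_of_dvd_mul_left this
    exact hco.mul_dvd hxb hyb
  · rw [Ideal.span_le, Set.singleton_subset_iff]
    rw [SetLike.mem_coe, Ideal.mem_torsionOf_iff, smul_add]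
    have e1 : (x * y) • m₁ = 0 := by rw [mul_comm, mul_smul, hx0, smul_zero]
    have e2 : (x * y) • m₂ = 0 := by rw [mul_smul, hy0, smul_zero]
    rw [e1, e2, add_zero]

variable {k : Type*} [Field k] {M : Type*} [AddCommGroup M]
    [Module (Polynomial k) M] [Module k M] [IsScalarTower k (Polynomial k) M]

/-- Existence of an element of order exactly `p^e` for `p` prime. -/
lemma aux_exists_prime_pow
    (hdim : ∀ a : Polynomial k, a ≠ 0 →
      Module.finrank k ((Submodule.torsionBy (Polynomial k) M a).restrictScalars k) =
        a.natDegree)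
    {p : Polynomial k} (hp : Prime p) (e : ℕ) :
    ∃ m : M, Ideal.torsionOf (Polynomial k) M m = Ideal.span {p ^ e} := by
  rcases e with _ | e
  · refine ⟨0, ?_⟩
    rw [Ideal.torsionOf_zero, pow_zero, Ideal.span_singleton_one]
  · have hpd : 0 < p.natDegree := by
      rcases Nat.eq_zero_or_pos p.natDegree with h | h
      · exfalso
        apply hp.not_unit
        rw [Polynomial.isUnit_iff_degree_eq_zero, Polynomial.degree_eq_natDegree hp.ne_zero, h]
        rfl
      · exact h
    have h1 : Module.finrank k
        ((Submodule.torsionBy (Polynomial k) M (p ^ e)).restrictScalars k) = e * p.natDegree := by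
      rw [hdim _ (pow_ne_zero _ hp.ne_zero), Polynomial.natDegree_pow]
    have h2 : Module.finrank k
        ((Submodule.torsionBy (Polynomial k) M (p ^ (e + 1))).restrictScalars k)
        = (e + 1) * p.natDegree := by
      rw [hdim _ (pow_ne_zero _ hp.ne_zero), Polynomial.natDegree_pow]
    haveI : FiniteDimensional k
        ((Submodule.torsionBy (Polynomial k) M (p ^ (e + 1))).restrictScalars k) := by
      refine FiniteDimensional.of_finrank_pos ?_
      rw [h2]; positivity
    have hle : (Submodule.torsionBy (Polynomial k) M (p ^ e)).restrictScalars k ≤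
        (Submodule.torsionBy (Polynomial k) M (p ^ (e + 1))).restrictScalars k :=
      Submodule.torsionBy_le_torsionBy_of_dvd _ _ (pow_dvd_pow p (Nat.le_succ e))
    have hne : (Submodule.torsionBy (Polynomial k) M (p ^ e)).restrictScalars k ≠
        (Submodule.torsionBy (Polynomial k) M (p ^ (e + 1))).restrictScalars k := by
      intro h
      rw [h, h2, add_mul, one_mul] at h1
      omega
    obtain ⟨m, hm2, hm1⟩ := SetLike.exists_of_lt (lt_of_le_of_ne hle hne)
    rw [Submodule.restrictScalars_mem, Submodule.mem_torsionBy_iff] at hm2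
    have hm1' : ¬ (p ^ e) • m = 0 := by
      intro h
      exact hm1 ((Submodule.restrictScalars_mem _ _ _).mpr
        ((Submodule.mem_torsionBy_iff _ _).mpr h))
    obtain ⟨d, hd⟩ := (IsPrincipalIdealRing.principal (Ideal.torsionOf (Polynomial k) M m)).1
    rw [Ideal.submodule_span_eq] at hd
    have hdvd : d ∣ p ^ (e + 1) := by
      rw [← Ideal.mem_span_singleton, ← hd, Ideal.mem_torsionOf_iff]
      exact hm2
    obtain ⟨i, hi, hassoc⟩ := (dvd_prime_pow hp (e + 1)).mp hdvd
    have hie : i = e + 1 := by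
      by_contra h
      have hile : i ≤ e := by omega
      apply hm1'
      have : p ^ e ∈ Ideal.torsionOf (Polynomial k) M m := by
        rw [hd, Ideal.mem_span_singleton]
        exact hassoc.dvd.trans (pow_dvd_pow p hile)
      rwa [Ideal.mem_torsionOf_iff] at this
    refine ⟨m, ?_⟩
    rw [hd]
    exact Ideal.span_singleton_eq_span_singleton.mpr (hie ▸ hassoc)

/-- Existence of an element of order exactly `a` for any nonzero `a`. -/
lemma aux_exists
    (hdim : ∀ a : Polynomial k, a ≠ 0 →
      Module.finrank k ((Submodule.torsionBy (Polynomial k) M a).restrictScalars k) =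
        a.natDegree)
    (a : Polynomial k) (ha : a ≠ 0) :
    ∃ m : M, Ideal.torsionOf (Polynomial k) M m = Ideal.span {a} := by
  revert ha
  refine UniqueFactorizationMonoid.induction_on_coprime
    (P := fun a : Polynomial k => a ≠ 0 →
      ∃ m : M, Ideal.torsionOf (Polynomial k) M m = Ideal.span {a}) a ?_ ?_ ?_ ?_
  · intro h; exact absurd rfl h
  · intro x hx _
    exact ⟨0, by rw [Ideal.torsionOf_zero, Ideal.span_singleton_eq_top.mpr hx]⟩
  · intro p i hp _
    exact aux_exists_prime_pow hdim hp i
  · intro x y hrel hx hy hxy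
    obtain ⟨m₁, hm₁⟩ := hx (left_ne_zero_of_mul hxy)
    obtain ⟨m₂, hm₂⟩ := hy (right_ne_zero_of_mul hxy)
    exact ⟨m₁ + m₂, aux_torsionOf_add hm₁ hm₂ hrel.isCoprime⟩

end Aux

/-- if `M` is a module over `A = k[t]` such that the `a`-torsion submodule
`M[a] = {m : a • m = 0}` has `k`-dimension `deg a` for every nonzero `a`, then
`M[a] ≅ A/(a)` as `A`-modules for every nonzero `a`. -/
theorem stmt_6 (k : Type*) [Field k] (M : Type*) [AddCommGroup M]
    [Module (Polynomial k) M] [Module k M] [IsScalarTower k (Polynomial k) M]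
    (hdim : ∀ a : Polynomial k, a ≠ 0 →
      Module.finrank k ((Submodule.torsionBy (Polynomial k) M a).restrictScalars k) =
        a.natDegree)
    (a : Polynomial k) (ha : a ≠ 0) :
    Nonempty ((Submodule.torsionBy (Polynomial k) M a) ≃ₗ[Polynomial k]
      (Polynomial k ⧸ Ideal.span ({a} : Set (Polynomial k)))) := by
  -- the k-dimension of the quotient is deg a
  have hq : Module.finrank k (Polynomial k ⧸ Ideal.span ({a} : Set (Polynomial k)))
      = a.natDegree := by
    have := (AdjoinRoot.powerBasis ha).finrank
    exact (by simpa [AdjoinRoot.powerBasis] using this : Module.finrank k (AdjoinRoot a) = a.natDegree)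
  -- obtain an element of order exactly a
  obtain ⟨m, hm⟩ := aux_exists hdim a ha
  have hma : a • m = 0 := by
    have : a ∈ Ideal.torsionOf (Polynomial k) M m := hm ▸ Ideal.mem_span_singleton_self a
    rwa [Ideal.mem_torsionOf_iff] at this
  -- the cyclic module generated by m is isomorphic to the quotient
  have e1 : (Polynomial k ⧸ Ideal.span ({a} : Set (Polynomial k))) ≃ₗ[Polynomial k]
      ↥(Submodule.span (Polynomial k) {m}) :=
    hm ▸ Ideal.quotTorsionOfEquivSpanSingleton (Polynomial k) M m
  -- it sits inside the torsion module
  have hle : Submodule.span (Polynomial k) {m} ≤ Submodule.torsionBy (Polynomial k) M a := by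
    rw [Submodule.span_le, Set.singleton_subset_iff]
    exact (Submodule.mem_torsionBy_iff _ _).mpr hma
  -- finite dimensionality of the torsion module
  haveI hfd : FiniteDimensional k ((Submodule.torsionBy (Polynomial k) M a).restrictScalars k) := by
    rcases Nat.eq_zero_or_pos a.natDegree with hzero | hpos
    · -- a is a unit, so the torsion module is trivial
      have hu : IsUnit a := by
        rw [Polynomial.isUnit_iff_degree_eq_zero, Polynomial.degree_eq_natDegree ha, hzero]
        rfl
      have hbot : Submodule.torsionBy (Polynomial k) M a = ⊥ := by
        rw [eq_bot_iff]
        intro x hx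
        rw [Submodule.mem_torsionBy_iff] at hx
        obtain ⟨u, rfl⟩ := hu
        have : ((u⁻¹ : (Polynomial k)ˣ) : Polynomial k) • ((u : Polynomial k) • x) = 0 := by
          rw [hx, smul_zero]
        rwa [← mul_smul, Units.inv_mul, one_smul] at this
      rw [hbot]
      have : ((⊥ : Submodule (Polynomial k) M).restrictScalars k) = (⊥ : Submodule k M) :=
        Submodule.restrictScalars_bot k (R := Polynomial k) (M := M)
      rw [this]
      infer_instance
    · exact FiniteDimensional.of_finrank_pos (by rw [hdim a ha]; exact hpos)
  -- compute the finrank of the cyclic module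
  have hfr : Module.finrank k ((Submodule.span (Polynomial k) {m}).restrictScalars k)
      = a.natDegree := by
    have e2 : ((Submodule.span (Polynomial k) {m}).restrictScalars k) ≃ₗ[k]
        ↥(Submodule.span (Polynomial k) {m}) :=
      (Submodule.restrictScalarsEquiv k _ _ (Submodule.span (Polynomial k) {m})).restrictScalars k
    rw [e2.finrank_eq, ← (e1.restrictScalars k).finrank_eq, hq]
  -- the two submodules are equal
  have heq : (Submodule.span (Polynomial k) {m}).restrictScalars k =
      (Submodule.torsionBy (Polynomial k) M a).restrictScalars k :=
    Submodule.eq_of_le_of_finrank_le hle (by rw [hdim a ha, hfr])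
  have heq' : Submodule.span (Polynomial k) {m} = Submodule.torsionBy (Polynomial k) M a :=
    Submodule.restrictScalars_injective k _ _ heq
  exact ⟨(LinearEquiv.ofEq _ _ heq'.symm).trans e1.symm⟩
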